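/- arXiv:math/0402096 — 3 statements merged into one kernel-verified Lean document; each statement's English description precedes it below -/
import Mathlib

section
/- Let A, B ⊆ ℝ be Lebesgue measurable sets of equal finite positive measure λ₁(A) = λ₁(B) < ∞, contained in a bounded set, and suppose that for every τ ∈ A \ B and every t ∈ B \ A one has |τ| ≤ |t|. Then for every integer N ≥ 1, ∫_A |τ|^(N-1) dτ ≤ ∫_B |t|^(N-1) dt. -/
open MeasureTheory

/-- rearrangement comparison on the line. If `A, B ⊆ ℝ` are measurable,
bounded, of equal finite positive measure, and every point of `A \ B` is closer to the
origin than every point of `B \ A`, then `∫_A |τ|^{N-1} dτ ≤ ∫_B |t|^{N-1} dt`. -/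
theorem stmt_3 (N : ℕ) (hN : 1 ≤ N) (A B : Set ℝ)
    (hA : MeasurableSet A) (hB : MeasurableSet B)
    (hbounded : ∃ M : ℝ, A ⊆ Set.Icc (-M) M ∧ B ⊆ Set.Icc (-M) M)
    (heq : volume A = volume B) (hfin : volume A < ⊤) (hpos : 0 < volume A)
    (hcomp : ∀ τ ∈ A \ B, ∀ t ∈ B \ A, |τ| ≤ |t|) :
    ∫ τ in A, |τ| ^ (N - 1) ≤ ∫ t in B, |t| ^ (N - 1) := by
  obtain ⟨M, hAM, hBM⟩ := hbounded
  set f : ℝ → ℝ := fun t => |t| ^ (N - 1) with hf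
  have hfc : Continuous f := continuous_abs.pow _
  have hfpos : ∀ t : ℝ, 0 ≤ f t := fun t => pow_nonneg (abs_nonneg t) _
  have hIcc : IntegrableOn f (Set.Icc (-M) M) := hfc.integrableOn_Icc
  have hiA : IntegrableOn f A := hIcc.mono_set hAM
  have hiB : IntegrableOn f B := hIcc.mono_set hBM
  have hABfin : volume (A ∩ B) ≠ ⊤ :=
    ((measure_mono Set.inter_subset_left).trans_lt hfin).ne
  have h1 : volume (A ∩ B) + volume (A \ B) = volume A := measure_inter_add_diff A hB
  have h2 : volume (B ∩ A) + volume (B \ A) = volume B := measure_inter_add_diff B hA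
  have hmeq : volume (A \ B) = volume (B \ A) := by
    rw [Set.inter_comm] at h2
    have := h1.trans (heq.trans h2.symm)
    exact (ENNReal.add_right_inj hABfin).mp this
  have hABdfin : volume (A \ B) < ⊤ := (measure_mono Set.diff_subset).trans_lt hfin
  have hBAdfin : volume (B \ A) < ⊤ :=
    (measure_mono Set.diff_subset).trans_lt (heq ▸ hfin)
  have splitA : ∫ τ in A, f τ = (∫ τ in A ∩ B, f τ) + ∫ τ in A \ B, f τ := by
    rw [← setIntegral_union
      ((Set.disjoint_sdiff_right).mono_left Set.inter_subset_right)
      (hA.diff hB) (hiA.mono_set Set.inter_subset_left)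
      (hiA.mono_set Set.diff_subset), Set.inter_union_diff]
  have splitB : ∫ t in B, f t = (∫ t in B ∩ A, f t) + ∫ t in B \ A, f t := by
    rw [← setIntegral_union
      ((Set.disjoint_sdiff_right).mono_left Set.inter_subset_right)
      (hB.diff hA) (hiB.mono_set Set.inter_subset_left)
      (hiB.mono_set Set.diff_subset), Set.inter_union_diff]
  rw [splitA, splitB, Set.inter_comm B A]
  refine add_le_add le_rfl ?_
  by_cases h0 : volume (A \ B) = 0
  · rw [Measure.restrict_eq_zero.mpr h0, integral_zero_measure]
    exact setIntegral_nonneg (hB.diff hA) fun t _ => hfpos t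
  · have hBAne : (B \ A).Nonempty := by
      rcases Set.eq_empty_or_nonempty (B \ A) with h | h
      · exact absurd (hmeq.trans (by rw [h]; simp)) h0
      · exact h
    set S : Set ℝ := abs '' (B \ A) with hS
    have hSne : S.Nonempty := hBAne.image _
    have hSbdd : BddBelow S := ⟨0, by rintro _ ⟨x, _, rfl⟩; exact abs_nonneg x⟩
    set c : ℝ := sInf S with hc
    have hc0 : 0 ≤ c := le_csInf hSne (by rintro _ ⟨x, _, rfl⟩; exact abs_nonneg x)
    have hup : ∀ τ ∈ A \ B, |τ| ≤ c := fun τ hτ =>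
      le_csInf hSne (by rintro _ ⟨t, ht, rfl⟩; exact hcomp τ hτ t ht)
    have hlow : ∀ t ∈ B \ A, c ≤ |t| := fun t ht => csInf_le hSbdd ⟨t, ht, rfl⟩
    calc ∫ τ in A \ B, f τ ≤ ∫ _ in A \ B, c ^ (N - 1) := by
          refine setIntegral_mono_on (hiA.mono_set Set.diff_subset)
            (integrableOn_const hABdfin.ne) (hA.diff hB) ?_
          intro τ hτ
          exact pow_le_pow_left₀ (abs_nonneg τ) (hup τ hτ) _
      _ = (volume (A \ B)).toReal * c ^ (N - 1) := by
          rw [setIntegral_const, smul_eq_mul, measureReal_def]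
      _ = (volume (B \ A)).toReal * c ^ (N - 1) := by rw [hmeq]
      _ = ∫ _ in B \ A, c ^ (N - 1) := by rw [setIntegral_const, smul_eq_mul, measureReal_def]
      _ ≤ ∫ t in B \ A, f t := by
          refine setIntegral_mono_on (integrableOn_const hBAdfin.ne)
            (hiB.mono_set Set.diff_subset) (hB.diff hA) ?_
          intro t ht
          exact pow_le_pow_left₀ hc0 (hlow t ht) _
end

section
/- Let B ⊂ ℝ^N be a euclidean ball, a ∈ B a point, and K ⊆ B a Lebesgue measurable set. Then there exists a real line l through a such that λ₁(B ∩ l) > 0 and λ_N(K)/λ_N(B) ≤ 2N · λ₁(K ∩ l)/λ₁(B ∩ l). -/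
open MeasureTheory Measure Set Metric ENNReal intervalIntegral
open scoped Pointwise RealInnerProductSpace

noncomputable section SlicingAux

variable {N : ℕ}

/-- Exit radius of the ray from `0` in direction `w` out of `closedBall c R`. -/
noncomputable def slR (c : EuclideanSpace ℝ (Fin N)) (R : ℝ) (w : EuclideanSpace ℝ (Fin N)) : ℝ :=
  ⟪c, w⟫ + Real.sqrt (⟪c, w⟫ ^ 2 + R ^ 2 - ‖c‖ ^ 2)

lemma sq_le_sq_of_norm' {c : EuclideanSpace ℝ (Fin N)} {R : ℝ} (hc : ‖c‖ ≤ R) :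
    ‖c‖ ^ 2 ≤ R ^ 2 := by nlinarith [norm_nonneg c]

lemma slR_sqrt_sq {c : EuclideanSpace ℝ (Fin N)} {R : ℝ} (hc : ‖c‖ ≤ R)
    (w : EuclideanSpace ℝ (Fin N)) :
    Real.sqrt (⟪c, w⟫ ^ 2 + R ^ 2 - ‖c‖ ^ 2) ^ 2 = ⟪c, w⟫ ^ 2 + R ^ 2 - ‖c‖ ^ 2 :=
  Real.sq_sqrt (by nlinarith [sq_le_sq_of_norm' hc, sq_nonneg (⟪c, w⟫ : ℝ)])

lemma slR_abs_le_sqrt {c : EuclideanSpace ℝ (Fin N)} {R : ℝ} (hc : ‖c‖ ≤ R)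
    (w : EuclideanSpace ℝ (Fin N)) :
    |(⟪c, w⟫ : ℝ)| ≤ Real.sqrt (⟪c, w⟫ ^ 2 + R ^ 2 - ‖c‖ ^ 2) := by
  rw [← Real.sqrt_sq_eq_abs]
  exact Real.sqrt_le_sqrt (by nlinarith [sq_le_sq_of_norm' hc])

lemma slR_nonneg {c : EuclideanSpace ℝ (Fin N)} {R : ℝ} (hc : ‖c‖ ≤ R)
    (w : EuclideanSpace ℝ (Fin N)) : 0 ≤ slR c R w := by
  have h := abs_le.mp (slR_abs_le_sqrt hc w)
  unfold slR; linarith [h.1]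

lemma slR_le {c : EuclideanSpace ℝ (Fin N)} {R : ℝ} (hc : ‖c‖ ≤ R) (hR : 0 ≤ R)
    {w : EuclideanSpace ℝ (Fin N)} (hw : ‖w‖ = 1) : slR c R w ≤ 2 * R := by
  have h1 : |(⟪c, w⟫ : ℝ)| ≤ ‖c‖ := by
    have := abs_real_inner_le_norm c w
    rwa [hw, mul_one] at this
  have h1' := abs_le.mp h1
  have h2 : Real.sqrt (⟪c, w⟫ ^ 2 + R ^ 2 - ‖c‖ ^ 2) ≤ R :=
    calc Real.sqrt (⟪c, w⟫ ^ 2 + R ^ 2 - ‖c‖ ^ 2) ≤ Real.sqrt (R ^ 2) :=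
          Real.sqrt_le_sqrt (by nlinarith [sq_abs (⟪c, w⟫ : ℝ), norm_nonneg c])
      _ = R := Real.sqrt_sq hR
  unfold slR
  linarith [h1'.2, hc]

lemma slR_mem_iff {c : EuclideanSpace ℝ (Fin N)} {R : ℝ} (hc : ‖c‖ ≤ R)
    {w : EuclideanSpace ℝ (Fin N)} (hw : ‖w‖ = 1) {r : ℝ} (hr : 0 < r) :
    r • w ∈ Metric.closedBall c R ↔ r ≤ slR c R w := by
  have hR : 0 ≤ R := (norm_nonneg c).trans hc
  have hD0 : 0 ≤ Real.sqrt (⟪c, w⟫ ^ 2 + R ^ 2 - ‖c‖ ^ 2) := Real.sqrt_nonneg _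
  have hDsq := slR_sqrt_sq hc w
  have hDt := abs_le.mp (slR_abs_le_sqrt hc w)
  have hn : ‖r • w - c‖ ^ 2 = r ^ 2 - 2 * (r * ⟪c, w⟫) + ‖c‖ ^ 2 := by
    rw [norm_sub_sq_real, norm_smul, real_inner_smul_left, hw, real_inner_comm w c,
      Real.norm_eq_abs, abs_of_pos hr]
    ring
  rw [Metric.mem_closedBall, dist_eq_norm]
  unfold slR
  constructor
  · intro h
    have h2 : ‖r • w - c‖ ^ 2 ≤ R ^ 2 := by nlinarith [norm_nonneg (r • w - c)]
    rw [hn] at h2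
    nlinarith [hDt.1, hDt.2]
  · intro h
    have h3 : ‖r • w - c‖ ^ 2 ≤ R ^ 2 := by rw [hn]; nlinarith [hDt.1, hDt.2]
    nlinarith [norm_nonneg (r • w - c)]

lemma slR_continuous (c : EuclideanSpace ℝ (Fin N)) (R : ℝ) : Continuous (slR c R) := by
  unfold slR
  have h1 : Continuous fun w : EuclideanSpace ℝ (Fin N) => (⟪c, w⟫ : ℝ) :=
    continuous_const.inner continuous_id
  exact h1.add ((h1.pow 2).add continuous_const |>.sub continuous_const).sqrt

lemma cross_ineq (hN : 1 ≤ N) {x y : ℝ} (hx : 0 ≤ x) (hy : 0 ≤ y) :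
    (x ^ (N - 1) + y ^ (N - 1)) * (x + y) ≤ 2 * (x ^ N + y ^ N) := by
  obtain ⟨m, rfl⟩ : ∃ m, N = m + 1 := ⟨N - 1, (Nat.succ_pred_eq_of_pos hN).symm⟩
  simp only [Nat.add_sub_cancel]
  rcases le_total x y with h | h
  · nlinarith [mul_nonneg (sub_nonneg.mpr h) (sub_nonneg.mpr (pow_le_pow_left₀ hx h m)),
      pow_succ x m, pow_succ y m, pow_nonneg hx m, pow_nonneg hy m]
  · nlinarith [mul_nonneg (sub_nonneg.mpr h) (sub_nonneg.mpr (pow_le_pow_left₀ hy h m)),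
      pow_succ x m, pow_succ y m, pow_nonneg hx m, pow_nonneg hy m]

lemma sliceB_eq {c : EuclideanSpace ℝ (Fin N)} {R : ℝ} (hc : ‖c‖ ≤ R)
    {w : EuclideanSpace ℝ (Fin N)} (hw : ‖w‖ = 1) :
    {t : ℝ | t • w ∈ Metric.closedBall c R} = Icc (-(slR c R (-w))) (slR c R w) := by
  have hw' : ‖-w‖ = 1 := by rwa [norm_neg]
  ext t
  simp only [Set.mem_setOf_eq, Set.mem_Icc]
  rcases lt_trichotomy t 0 with ht | rfl | ht
  · have hmem : t • w = (-t) • (-w) := by rw [smul_neg, neg_smul, neg_neg]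
    rw [hmem, slR_mem_iff hc hw' (by linarith)]
    constructor
    · intro h; exact ⟨by linarith, by linarith [slR_nonneg hc w]⟩
    · intro h; linarith [h.1]
  · simp only [zero_smul]
    constructor
    · intro _; exact ⟨by linarith [slR_nonneg hc (-w)], slR_nonneg hc w⟩
    · intro _
      rw [Metric.mem_closedBall, dist_zero_left]
      exact hc
  · rw [slR_mem_iff hc hw ht]
    constructor
    · intro h; exact ⟨by linarith [slR_nonneg hc (-w)], h⟩
    · intro h; exact h.2

lemma polar_lintegral (hN : 1 ≤ N) (f : EuclideanSpace ℝ (Fin N) → ℝ≥0∞) (hf : Measurable f) :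
    ∫⁻ x, f x ∂(volume : Measure (EuclideanSpace ℝ (Fin N))) =
      ∫⁻ ω : sphere (0 : EuclideanSpace ℝ (Fin N)) 1,
        (∫⁻ r in Ioi (0:ℝ), ENNReal.ofReal (r ^ (N-1)) * f (r • (ω : EuclideanSpace ℝ (Fin N))))
        ∂((volume : Measure (EuclideanSpace ℝ (Fin N))).toSphere) := by
  haveI : Nontrivial (EuclideanSpace ℝ (Fin N)) :=
    Module.nontrivial_of_finrank_pos (R := ℝ) (by rw [finrank_euclideanSpace_fin]; omega)
  set μ : Measure (EuclideanSpace ℝ (Fin N)) := volume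
  have hdim : Module.finrank ℝ (EuclideanSpace ℝ (Fin N)) = N := finrank_euclideanSpace_fin
  have hg : Measurable fun p : sphere (0 : EuclideanSpace ℝ (Fin N)) 1 × Ioi (0:ℝ) =>
      f ((p.2 : ℝ) • (p.1 : EuclideanSpace ℝ (Fin N))) := by
    apply hf.comp
    exact (measurable_subtype_coe.comp measurable_snd).smul
      (measurable_subtype_coe.comp measurable_fst)
  calc ∫⁻ x, f x ∂μ = ∫⁻ x in {(0 : EuclideanSpace ℝ (Fin N))}ᶜ, f x ∂μ := by
        rw [restrict_compl_singleton]
    _ = ∫⁻ x : ({(0 : EuclideanSpace ℝ (Fin N))}ᶜ : Set (EuclideanSpace ℝ (Fin N))), f x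
          ∂(μ.comap (↑)) := (lintegral_subtype_comap (measurableSet_singleton _).compl _).symm
    _ = ∫⁻ p : sphere (0 : EuclideanSpace ℝ (Fin N)) 1 × Ioi (0:ℝ),
          f ((p.2 : ℝ) • (p.1 : EuclideanSpace ℝ (Fin N)))
          ∂(μ.toSphere.prod (volumeIoiPow (Module.finrank ℝ (EuclideanSpace ℝ (Fin N)) - 1))) := by
        rw [← (μ.measurePreserving_homeomorphUnitSphereProd).lintegral_comp hg]
        refine lintegral_congr fun x => ?_
        congr 1
        exact congrArg Subtype.val
          ((homeomorphUnitSphereProd (EuclideanSpace ℝ (Fin N))).symm_apply_apply x).symm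
    _ = ∫⁻ ω : sphere (0 : EuclideanSpace ℝ (Fin N)) 1,
          (∫⁻ r : Ioi (0:ℝ), f ((r : ℝ) • (ω : EuclideanSpace ℝ (Fin N)))
            ∂(volumeIoiPow (N - 1))) ∂μ.toSphere := by
        rw [hdim, lintegral_prod _ hg.aemeasurable]
    _ = _ := by
        refine lintegral_congr fun ω => ?_
        have hF : Measurable fun r : Ioi (0:ℝ) => f ((r : ℝ) • (ω : EuclideanSpace ℝ (Fin N))) :=
          hf.comp (measurable_subtype_coe.smul_const _)
        have hw : Measurable fun r : Ioi (0:ℝ) => ENNReal.ofReal ((r:ℝ) ^ (N-1)) :=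
          (measurable_subtype_coe.pow_const _).ennreal_ofReal
        rw [volumeIoiPow, lintegral_withDensity_eq_lintegral_mul _ hw hF]
        rw [← lintegral_subtype_comap measurableSet_Ioi
          (fun r : ℝ => ENNReal.ofReal (r ^ (N-1)) * f (r • (ω : EuclideanSpace ℝ (Fin N))))]
        rfl

lemma volume_neg_set (S : Set (EuclideanSpace ℝ (Fin N))) : volume (-S) = volume S := by
  have h : -S = (-1 : ℝ) • S := by
    ext x
    simp only [Set.mem_neg, Set.mem_smul_set]
    constructor
    · intro hx; exact ⟨-x, hx, by simp⟩
    · rintro ⟨y, hy, rfl⟩; simpa using hy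
  rw [h, addHaar_smul]
  simp

lemma volume_neg_real (S : Set ℝ) : volume (-S) = volume S := by
  have h : -S = (-1 : ℝ) • S := by
    ext x
    simp only [Set.mem_neg, Set.mem_smul_set]
    constructor
    · intro hx; exact ⟨-x, hx, by simp⟩
    · rintro ⟨y, hy, rfl⟩; simpa using hy
  rw [h, addHaar_smul]
  simp

lemma toSphere_map_neg (hN : 1 ≤ N) :
    ((volume : Measure (EuclideanSpace ℝ (Fin N))).toSphere).map
        (fun ω : sphere (0 : EuclideanSpace ℝ (Fin N)) 1 => -ω) =
      (volume : Measure (EuclideanSpace ℝ (Fin N))).toSphere := by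
  have hneg : Measurable (fun ω : sphere (0 : EuclideanSpace ℝ (Fin N)) 1 => -ω) :=
    (continuous_neg).measurable
  refine Measure.ext fun s hs => ?_
  rw [Measure.map_apply hneg hs, toSphere_apply' _ (hneg hs), toSphere_apply' _ hs]
  congr 1
  have himg : (Subtype.val '' ((fun ω : sphere (0 : EuclideanSpace ℝ (Fin N)) 1 => -ω) ⁻¹' s))
      = -(Subtype.val '' s) := by
    ext x
    simp only [Set.mem_image, Set.mem_preimage, Set.mem_neg]
    constructor
    · rintro ⟨ω, hω, rfl⟩
      exact ⟨-ω, hω, by rw [coe_neg_sphere]⟩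
    · rintro ⟨ψ, hψ, hx⟩
      exact ⟨-ψ, by simpa using hψ, by rw [coe_neg_sphere, hx, neg_neg]⟩
  rw [himg]
  have hsmul : (Ioo (0:ℝ) 1) • (-(Subtype.val '' s)) = -((Ioo (0:ℝ) 1) • (Subtype.val '' s)) := by
    ext x
    simp only [Set.mem_smul, Set.mem_neg, Set.mem_smul_set]
    constructor
    · rintro ⟨r, hr, y, hy, rfl⟩
      exact ⟨r, hr, -y, hy, by rw [smul_neg]⟩
    · rintro ⟨r, hr, y, hy, hx⟩
      exact ⟨r, hr, -y, by simpa using hy, by rw [smul_neg, hx, neg_neg]⟩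
  rw [hsmul, volume_neg_set]

lemma lint_ind {S : Set (EuclideanSpace ℝ (Fin N))} (hS : MeasurableSet S)
    (w : EuclideanSpace ℝ (Fin N)) :
    ∫⁻ r in Ioi (0:ℝ), S.indicator 1 (r • w) =
      volume ((fun r : ℝ => r • w) ⁻¹' S ∩ Ioi 0) := by
  have hpre : MeasurableSet ((fun r : ℝ => r • w) ⁻¹' S) :=
    (measurable_id.smul_const w) hS
  have heq : (fun r : ℝ => S.indicator (1 : EuclideanSpace ℝ (Fin N) → ℝ≥0∞) (r • w)) =
      ((fun r : ℝ => r • w) ⁻¹' S).indicator 1 := by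
    ext r
    by_cases h : r • w ∈ S <;> simp [Set.indicator, h]
  rw [heq, lintegral_indicator_one hpre, Measure.restrict_apply hpre]

lemma full_slice_ge {S : Set (EuclideanSpace ℝ (Fin N))} (hS : MeasurableSet S)
    (w : EuclideanSpace ℝ (Fin N)) :
    volume ((fun r : ℝ => r • w) ⁻¹' S ∩ Ioi 0) +
      volume ((fun r : ℝ => r • (-w)) ⁻¹' S ∩ Ioi 0) ≤ volume {t : ℝ | t • w ∈ S} := by
  have hpre : MeasurableSet ((fun r : ℝ => r • w) ⁻¹' S) := (measurable_id.smul_const w) hS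
  have hkey : (fun r : ℝ => r • (-w)) ⁻¹' S ∩ Ioi 0 =
      -((fun r : ℝ => r • w) ⁻¹' S ∩ Iio 0) := by
    ext x
    simp only [Set.mem_inter_iff, Set.mem_preimage, Set.mem_neg, Set.mem_Ioi, Set.mem_Iio]
    constructor
    · rintro ⟨h1, h2⟩
      refine ⟨by rwa [neg_smul, ← smul_neg], by linarith⟩
    · rintro ⟨h1, h2⟩
      refine ⟨by rwa [smul_neg, ← neg_smul], by linarith⟩
  rw [hkey, volume_neg_real]
  have hsub : ((fun r : ℝ => r • w) ⁻¹' S ∩ Ioi 0) ∪ ((fun r : ℝ => r • w) ⁻¹' S ∩ Iio 0)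
      ⊆ {t : ℝ | t • w ∈ S} := by
    rintro t (⟨h, _⟩ | ⟨h, _⟩) <;> exact h
  calc volume ((fun r : ℝ => r • w) ⁻¹' S ∩ Ioi 0) +
        volume ((fun r : ℝ => r • w) ⁻¹' S ∩ Iio 0)
      = volume (((fun r : ℝ => r • w) ⁻¹' S ∩ Ioi 0) ∪
          ((fun r : ℝ => r • w) ⁻¹' S ∩ Iio 0)) := by
        rw [measure_union ?_ (hpre.inter measurableSet_Iio)]
        refine Disjoint.mono inter_subset_right inter_subset_right ?_
        rw [Set.disjoint_left]
        intro x hx1 hx2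
        exact lt_asymm (mem_Ioi.mp hx1) (mem_Iio.mp hx2)
    _ ≤ _ := measure_mono hsub

lemma W_le {c : EuclideanSpace ℝ (Fin N)} {R : ℝ} (hc : ‖c‖ ≤ R)
    {S : Set (EuclideanSpace ℝ (Fin N))} (hS : MeasurableSet S)
    (hsub : S ⊆ Metric.closedBall c R) {w : EuclideanSpace ℝ (Fin N)} (hw : ‖w‖ = 1) :
    ∫⁻ r in Ioi (0:ℝ), ENNReal.ofReal (r ^ (N-1)) * S.indicator 1 (r • w) ≤
      ENNReal.ofReal (slR c R w ^ (N-1)) * ∫⁻ r in Ioi (0:ℝ), S.indicator 1 (r • w) := by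
  have hmeas : Measurable fun r : ℝ => S.indicator (1 : EuclideanSpace ℝ (Fin N) → ℝ≥0∞) (r • w) :=
    (measurable_one.indicator hS).comp (measurable_id.smul_const w)
  rw [← lintegral_const_mul _ hmeas]
  refine setLIntegral_mono (measurable_const.mul hmeas) fun r hr => ?_
  by_cases h : r • w ∈ S
  · have hle : r ≤ slR c R w := (slR_mem_iff hc hw (mem_Ioi.mp hr)).mp (hsub h)
    simp only [Set.indicator_of_mem h, Pi.one_apply, mul_one]
    exact ofReal_le_ofReal (pow_le_pow_left₀ (le_of_lt (mem_Ioi.mp hr)) hle _)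
  · simp [Set.indicator_of_notMem h]

lemma W_ball (hN : 1 ≤ N) {c : EuclideanSpace ℝ (Fin N)} {R : ℝ} (hc : ‖c‖ ≤ R)
    {w : EuclideanSpace ℝ (Fin N)} (hw : ‖w‖ = 1) :
    ∫⁻ r in Ioi (0:ℝ), ENNReal.ofReal (r ^ (N-1)) *
        (Metric.closedBall c R).indicator 1 (r • w) =
      ENNReal.ofReal (slR c R w ^ N / N) := by
  have hρ0 : 0 ≤ slR c R w := slR_nonneg hc w
  have h1 : ∫⁻ r in Ioi (0:ℝ), ENNReal.ofReal (r ^ (N-1)) *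
        (Metric.closedBall c R).indicator 1 (r • w) =
      ∫⁻ r in Ioi (0:ℝ), (Ioc (0:ℝ) (slR c R w)).indicator
        (fun r => ENNReal.ofReal (r ^ (N-1))) r := by
    refine setLIntegral_congr_fun measurableSet_Ioi (fun r hr => ?_)
    have hr' : (0:ℝ) < r := mem_Ioi.mp hr
    by_cases h : r • w ∈ Metric.closedBall c R
    · have hle : r ≤ slR c R w := (slR_mem_iff hc hw hr').mp h
      rw [Set.indicator_of_mem h, Set.indicator_of_mem (Set.mem_Ioc.mpr ⟨hr', hle⟩),
        Pi.one_apply, mul_one]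
    · have hgt : ¬ r ∈ Ioc (0:ℝ) (slR c R w) := by
        intro hmem
        exact h ((slR_mem_iff hc hw hr').mpr hmem.2)
      rw [Set.indicator_of_notMem h, Set.indicator_of_notMem hgt, mul_zero]
  rw [h1, lintegral_indicator measurableSet_Ioc, Measure.restrict_restrict measurableSet_Ioc,
    Set.inter_eq_left.mpr (Ioc_subset_Ioi_self)]
  rw [← ofReal_integral_eq_lintegral_ofReal (intervalIntegrable_pow (N-1)).1
    (by filter_upwards [ae_restrict_mem measurableSet_Ioc] with y hy
        exact pow_nonneg hy.1.le _)]
  rw [← intervalIntegral.integral_of_le hρ0, integral_pow, Nat.sub_add_cancel hN,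
    zero_pow (by omega : N ≠ 0), sub_zero]
  have hcast : ((N - 1 : ℕ) : ℝ) + 1 = (N : ℝ) := by
    exact_mod_cast congrArg (Nat.cast (R := ℝ)) (Nat.succ_pred_eq_of_pos hN)
  rw [hcast]

end SlicingAux

/-- real slicing lemma: for a euclidean ball `B ⊆ ℝ^N`, a point `a ∈ B` and a
measurable `K ⊆ B`, there is a real line `l = {a + t·w : t ∈ ℝ}` through `a` with
`λ₁(B ∩ l) > 0` and `λ_N(K)/λ_N(B) ≤ 2N · λ₁(K ∩ l)/λ₁(B ∩ l)`. The length measure on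
`l` is computed via the arclength parametrization `t ↦ a + t • w`, `‖w‖ = 1`. -/
theorem stmt_5 (N : ℕ) (hN : 1 ≤ N) (x₀ : EuclideanSpace ℝ (Fin N)) (R : ℝ) (hR : 0 < R)
    (a : EuclideanSpace ℝ (Fin N)) (ha : a ∈ Metric.closedBall x₀ R)
    (K : Set (EuclideanSpace ℝ (Fin N))) (hK : MeasurableSet K)
    (hKB : K ⊆ Metric.closedBall x₀ R) :
    ∃ w : EuclideanSpace ℝ (Fin N), ‖w‖ = 1 ∧
      0 < volume {t : ℝ | a + t • w ∈ Metric.closedBall x₀ R} ∧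
      (volume K).toReal / (volume (Metric.closedBall x₀ R)).toReal ≤
        2 * N * ((volume {t : ℝ | a + t • w ∈ K}).toReal /
          (volume {t : ℝ | a + t • w ∈ Metric.closedBall x₀ R}).toReal) := by
  classical
  by_contra hcon
  push_neg at hcon
  set c : EuclideanSpace ℝ (Fin N) := x₀ - a with hcdef
  have hc : ‖c‖ ≤ R := by
    rw [hcdef, norm_sub_rev]
    exact mem_closedBall_iff_norm.mp ha
  set B := Metric.closedBall x₀ R with hBdef
  set K' : Set (EuclideanSpace ℝ (Fin N)) := (fun x => a + x) ⁻¹' K with hK'def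
  have hK' : MeasurableSet K' := hK.preimage (measurable_const_add a)
  have hKvol : volume K' = volume K := measure_preimage_add volume a K
  have hBpre : ∀ x : EuclideanSpace ℝ (Fin N), (a + x ∈ B ↔ x ∈ Metric.closedBall c R) := by
    intro x
    rw [hBdef, mem_closedBall_iff_norm, mem_closedBall_iff_norm]
    have h : a + x - x₀ = x - c := by rw [hcdef]; abel
    rw [h]
  have hK'B : K' ⊆ Metric.closedBall c R := fun x hx => (hBpre x).mp (hKB hx)
  have hμBpos : 0 < volume B := measure_closedBall_pos volume x₀ hR
  have hμBfin : volume B ≠ ⊤ := measure_closedBall_lt_top.ne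
  have hμKfin : volume K ≠ ⊤ :=
    ((measure_mono hKB).trans_lt (lt_top_iff_ne_top.mpr hμBfin)).ne
  -- abbreviations
  set σ := (volume : Measure (EuclideanSpace ℝ (Fin N))).toSphere with hσdef
  set ρ : EuclideanSpace ℝ (Fin N) → ℝ := slR c R with hρdef
  set Mh : EuclideanSpace ℝ (Fin N) → ℝ≥0∞ :=
    fun w => ∫⁻ r in Ioi (0:ℝ), K'.indicator 1 (r • w) with hMhdef
  set Wh : EuclideanSpace ℝ (Fin N) → ℝ≥0∞ :=
    fun w => ∫⁻ r in Ioi (0:ℝ), ENNReal.ofReal (r ^ (N-1)) * K'.indicator 1 (r • w) with hWhdef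
  set C : ℝ≥0∞ := 2 * (N : ℝ≥0∞) * volume B with hCdef
  have hunit : ∀ ω : sphere (0 : EuclideanSpace ℝ (Fin N)) 1,
      ‖(ω : EuclideanSpace ℝ (Fin N))‖ = 1 := fun ω => mem_sphere_zero_iff_norm.mp ω.2
  -- polar formulas
  have hμK : volume K = ∫⁻ ω : sphere (0 : EuclideanSpace ℝ (Fin N)) 1,
      Wh (ω : EuclideanSpace ℝ (Fin N)) ∂σ := by
    rw [← hKvol, ← lintegral_indicator_one hK']
    exact polar_lintegral hN _ (measurable_one.indicator hK')
  have hμB : volume B = ∫⁻ ω : sphere (0 : EuclideanSpace ℝ (Fin N)) 1,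
      ENNReal.ofReal (ρ (ω : EuclideanSpace ℝ (Fin N)) ^ N / N) ∂σ := by
    have h0 : volume (Metric.closedBall c R) = volume B := by
      have hBeq : Metric.closedBall c R = (fun x => a + x) ⁻¹' B := by
        ext x; rw [Set.mem_preimage]; exact (hBpre x).symm
      rw [hBeq, measure_preimage_add]
    rw [← h0, ← lintegral_indicator_one measurableSet_closedBall,
      polar_lintegral hN _ (measurable_one.indicator measurableSet_closedBall)]
    exact lintegral_congr fun ω => W_ball hN hc (hunit ω)
  -- pointwise weighted bound
  have hWQ : ∀ ω : sphere (0 : EuclideanSpace ℝ (Fin N)) 1,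
      Wh (ω : EuclideanSpace ℝ (Fin N)) ≤
        ENNReal.ofReal (ρ (ω : EuclideanSpace ℝ (Fin N)) ^ (N-1)) *
          Mh (ω : EuclideanSpace ℝ (Fin N)) :=
    fun ω => W_le hc hK' hK'B (hunit ω)
  -- slice identities
  have hsliceBvol : ∀ w : EuclideanSpace ℝ (Fin N), ‖w‖ = 1 →
      volume {t : ℝ | a + t • w ∈ B} = ENNReal.ofReal (ρ w + ρ (-w)) := by
    intro w hw
    have h1 : {t : ℝ | a + t • w ∈ B} = {t : ℝ | t • w ∈ Metric.closedBall c R} := by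
      ext t; exact hBpre _
    rw [h1, sliceB_eq hc hw, Real.volume_Icc]
    congr 1
    rw [hρdef]
    ring
  have hsliceK : ∀ w : EuclideanSpace ℝ (Fin N), ‖w‖ = 1 →
      Mh w + Mh (-w) ≤ volume {t : ℝ | a + t • w ∈ K} := by
    intro w hw
    have h1 : {t : ℝ | a + t • w ∈ K} = {t : ℝ | t • w ∈ K'} := rfl
    rw [h1, hMhdef]
    simp only []
    rw [lint_ind hK' w, lint_ind hK' (-w)]
    exact full_slice_ge hK' w
  -- the key pointwise inequality from the negated statement
  have key : ∀ ω : sphere (0 : EuclideanSpace ℝ (Fin N)) 1,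
      C * (Mh (ω : EuclideanSpace ℝ (Fin N)) + Mh (-(ω : EuclideanSpace ℝ (Fin N)))) ≤
        volume K * (ENNReal.ofReal (ρ (ω : EuclideanSpace ℝ (Fin N))) +
          ENNReal.ofReal (ρ (-(ω : EuclideanSpace ℝ (Fin N))))) ∧
      (0 < ρ (ω : EuclideanSpace ℝ (Fin N)) + ρ (-(ω : EuclideanSpace ℝ (Fin N))) →
        C * (Mh (ω : EuclideanSpace ℝ (Fin N)) + Mh (-(ω : EuclideanSpace ℝ (Fin N)))) <
          volume K * (ENNReal.ofReal (ρ (ω : EuclideanSpace ℝ (Fin N))) +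
            ENNReal.ofReal (ρ (-(ω : EuclideanSpace ℝ (Fin N)))))) := by
    intro ω
    set w : EuclideanSpace ℝ (Fin N) := (ω : EuclideanSpace ℝ (Fin N)) with hwdef
    have hw : ‖w‖ = 1 := hunit ω
    have hρw : 0 ≤ ρ w := slR_nonneg hc w
    have hρw' : 0 ≤ ρ (-w) := slR_nonneg hc (-w)
    have hLsum : volume {t : ℝ | a + t • w ∈ B} =
        ENNReal.ofReal (ρ w) + ENNReal.ofReal (ρ (-w)) := by
      rw [hsliceBvol w hw, ENNReal.ofReal_add hρw hρw']
    have hsubslice : {t : ℝ | a + t • w ∈ K} ⊆ {t : ℝ | a + t • w ∈ B} :=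
      fun t ht => hKB ht
    by_cases hL : 0 < volume {t : ℝ | a + t • w ∈ B}
    · have hstrict : C * (Mh w + Mh (-w)) <
          volume K * (ENNReal.ofReal (ρ w) + ENNReal.ofReal (ρ (-w))) := by
        have hcon' := hcon w hw hL
        set l := volume {t : ℝ | a + t • w ∈ B} with hldef
        set m := volume {t : ℝ | a + t • w ∈ K} with hmdef
        have hlfin : l ≠ ⊤ := by rw [hldef, hsliceBvol w hw]; exact ofReal_ne_top
        have hml : m ≤ l := measure_mono hsubslice
        have hmfin : m ≠ ⊤ := (hml.trans_lt (lt_top_iff_ne_top.mpr hlfin)).ne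
        have hlR : 0 < l.toReal := ENNReal.toReal_pos hL.ne' hlfin
        have hbR : 0 < (volume B).toReal := ENNReal.toReal_pos hμBpos.ne' hμBfin
        have hreal : 2 * (N:ℝ) * m.toReal * (volume B).toReal < (volume K).toReal * l.toReal := by
          have h2 : 2 * (N:ℝ) * (m.toReal / l.toReal) < (volume K).toReal / (volume B).toReal :=
            hcon'
          rw [mul_div_assoc'] at h2
          exact (div_lt_div_iff₀ hlR hbR).mp h2
        have hlt : C * m < volume K * l := by
          rw [← ENNReal.toReal_lt_toReal (by
              exact ENNReal.mul_ne_top (by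
                exact ENNReal.mul_ne_top (by finiteness) hμBfin) hmfin)
            (ENNReal.mul_ne_top hμKfin hlfin)]
          rw [hCdef]
          simp only [ENNReal.toReal_mul, ENNReal.toReal_ofNat, ENNReal.toReal_natCast]
          calc 2 * (N:ℝ) * (volume B).toReal * m.toReal
              = 2 * (N:ℝ) * m.toReal * (volume B).toReal := by ring
            _ < (volume K).toReal * l.toReal := hreal
        calc C * (Mh w + Mh (-w)) ≤ C * m := mul_le_mul_right (hsliceK w hw) C
          _ < volume K * l := hlt
          _ = volume K * (ENNReal.ofReal (ρ w) + ENNReal.ofReal (ρ (-w))) := by rw [hLsum]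
      exact ⟨hstrict.le, fun _ => hstrict⟩
    · have hL0 : volume {t : ℝ | a + t • w ∈ B} = 0 := by
        simpa using (not_lt.mp hL)
      have hM0 : Mh w + Mh (-w) = 0 := by
        have h1 : Mh w + Mh (-w) ≤ volume {t : ℝ | a + t • w ∈ K} := hsliceK w hw
        have h2 : volume {t : ℝ | a + t • w ∈ K} ≤ volume {t : ℝ | a + t • w ∈ B} :=
          measure_mono hsubslice
        exact le_antisymm (h1.trans (h2.trans_eq hL0)) zero_le
      constructor
      · rw [hM0, mul_zero]; exact zero_le
      · intro hpos
        exfalso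
        rw [hLsum] at hL0
        have : 0 < ENNReal.ofReal (ρ w) + ENNReal.ofReal (ρ (-w)) := by
          rw [← ENNReal.ofReal_add hρw hρw']
          exact ENNReal.ofReal_pos.mpr hpos
        rw [hL0] at this
        exact lt_irrefl 0 this
  -- measurability package
  have hρcont : Continuous ρ := slR_continuous c R
  have hcoe : Continuous fun ω : sphere (0 : EuclideanSpace ℝ (Fin N)) 1 =>
      (ω : EuclideanSpace ℝ (Fin N)) := continuous_subtype_val
  have hnegm : Measurable fun ω : sphere (0 : EuclideanSpace ℝ (Fin N)) 1 => -ω :=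
    (continuous_neg).measurable
  have hMh : Measurable fun ω : sphere (0 : EuclideanSpace ℝ (Fin N)) 1 =>
      Mh (ω : EuclideanSpace ℝ (Fin N)) := by
    have hjoint : Measurable fun p : (sphere (0 : EuclideanSpace ℝ (Fin N)) 1) × ℝ =>
        K'.indicator (1 : EuclideanSpace ℝ (Fin N) → ℝ≥0∞)
          (p.2 • (p.1 : EuclideanSpace ℝ (Fin N))) :=
      (measurable_one.indicator hK').comp
        ((continuous_snd.smul (hcoe.comp continuous_fst)).measurable)
    exact hjoint.lintegral_prod_right'
  have hMhn : Measurable fun ω : sphere (0 : EuclideanSpace ℝ (Fin N)) 1 =>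
      Mh (-(ω : EuclideanSpace ℝ (Fin N))) := by
    have := hMh.comp hnegm
    simpa [coe_neg_sphere, Function.comp_def] using this
  have hWh : Measurable fun ω : sphere (0 : EuclideanSpace ℝ (Fin N)) 1 =>
      Wh (ω : EuclideanSpace ℝ (Fin N)) := by
    have hjoint : Measurable fun p : (sphere (0 : EuclideanSpace ℝ (Fin N)) 1) × ℝ =>
        ENNReal.ofReal (p.2 ^ (N-1)) * K'.indicator (1 : EuclideanSpace ℝ (Fin N) → ℝ≥0∞)
          (p.2 • (p.1 : EuclideanSpace ℝ (Fin N))) := by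
      refine Measurable.mul ?_ ?_
      · exact (measurable_snd.pow_const _).ennreal_ofReal
      · exact (measurable_one.indicator hK').comp
          ((continuous_snd.smul (hcoe.comp continuous_fst)).measurable)
    exact hjoint.lintegral_prod_right'
  have hWhn : Measurable fun ω : sphere (0 : EuclideanSpace ℝ (Fin N)) 1 =>
      Wh (-(ω : EuclideanSpace ℝ (Fin N))) := by
    have := hWh.comp hnegm
    simpa [coe_neg_sphere, Function.comp_def] using this
  have hQm : Measurable fun ω : sphere (0 : EuclideanSpace ℝ (Fin N)) 1 =>
      ENNReal.ofReal (ρ (ω : EuclideanSpace ℝ (Fin N)) ^ (N-1)) :=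
    (((hρcont.comp hcoe).pow _)).measurable.ennreal_ofReal
  have hQnm : Measurable fun ω : sphere (0 : EuclideanSpace ℝ (Fin N)) 1 =>
      ENNReal.ofReal (ρ (-(ω : EuclideanSpace ℝ (Fin N))) ^ (N-1)) := by
    have := hQm.comp hnegm
    simpa [coe_neg_sphere, Function.comp_def] using this
  have hPm : Measurable fun ω : sphere (0 : EuclideanSpace ℝ (Fin N)) 1 =>
      ENNReal.ofReal (ρ (ω : EuclideanSpace ℝ (Fin N))) :=
    (hρcont.comp hcoe).measurable.ennreal_ofReal
  have hPnm : Measurable fun ω : sphere (0 : EuclideanSpace ℝ (Fin N)) 1 =>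
      ENNReal.ofReal (ρ (-(ω : EuclideanSpace ℝ (Fin N)))) := by
    have := hPm.comp hnegm
    simpa [coe_neg_sphere, Function.comp_def] using this
  have hXm : Measurable fun ω : sphere (0 : EuclideanSpace ℝ (Fin N)) 1 =>
      ENNReal.ofReal (ρ (ω : EuclideanSpace ℝ (Fin N)) ^ N) :=
    (((hρcont.comp hcoe).pow _)).measurable.ennreal_ofReal
  have hXnm : Measurable fun ω : sphere (0 : EuclideanSpace ℝ (Fin N)) 1 =>
      ENNReal.ofReal (ρ (-(ω : EuclideanSpace ℝ (Fin N))) ^ N) := by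
    have := hXm.comp hnegm
    simpa [coe_neg_sphere, Function.comp_def] using this
  have hXdivm : Measurable fun ω : sphere (0 : EuclideanSpace ℝ (Fin N)) 1 =>
      ENNReal.ofReal (ρ (ω : EuclideanSpace ℝ (Fin N)) ^ N / N) :=
    ((((hρcont.comp hcoe).pow _)).div_const _).measurable.ennreal_ofReal
  -- symmetry of the sphere measure
  have hsym : ∀ f : sphere (0 : EuclideanSpace ℝ (Fin N)) 1 → ℝ≥0∞, Measurable f →
      ∫⁻ ω, f (-ω) ∂σ = ∫⁻ ω, f ω ∂σ := by
    intro f hf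
    have h1 : ∫⁻ ω, f ω ∂(σ.map (fun ω => -ω)) = ∫⁻ ω, f (-ω) ∂σ :=
      lintegral_map hf hnegm
    rw [← h1]
    congr 1
    rw [hσdef]
    exact toSphere_map_neg hN
  -- integral identities
  have hWint : ∫⁻ ω : sphere (0 : EuclideanSpace ℝ (Fin N)) 1,
      Wh (ω : EuclideanSpace ℝ (Fin N)) ∂σ = volume K := hμK.symm
  have hWint' : ∫⁻ ω : sphere (0 : EuclideanSpace ℝ (Fin N)) 1,
      Wh (-(ω : EuclideanSpace ℝ (Fin N))) ∂σ = volume K := by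
    have h1 := hsym (fun ω => Wh (ω : EuclideanSpace ℝ (Fin N))) hWh
    calc ∫⁻ ω : sphere (0 : EuclideanSpace ℝ (Fin N)) 1,
        Wh (-(ω : EuclideanSpace ℝ (Fin N))) ∂σ
        = ∫⁻ ω : sphere (0 : EuclideanSpace ℝ (Fin N)) 1,
            Wh (((-ω : sphere (0 : EuclideanSpace ℝ (Fin N)) 1) : EuclideanSpace ℝ (Fin N))) ∂σ := by
          simp only [coe_neg_sphere]
      _ = volume K := h1.trans hμK.symm
  have hXint : ∫⁻ ω : sphere (0 : EuclideanSpace ℝ (Fin N)) 1,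
      ENNReal.ofReal (ρ (ω : EuclideanSpace ℝ (Fin N)) ^ N) ∂σ = (N : ℝ≥0∞) * volume B := by
    rw [hμB, ← lintegral_const_mul _ hXdivm]
    refine lintegral_congr fun ω => ?_
    rw [← ENNReal.ofReal_natCast N, ← ENNReal.ofReal_mul (Nat.cast_nonneg N)]
    congr 1
    field_simp
  have hXint' : ∫⁻ ω : sphere (0 : EuclideanSpace ℝ (Fin N)) 1,
      ENNReal.ofReal (ρ (-(ω : EuclideanSpace ℝ (Fin N))) ^ N) ∂σ = (N : ℝ≥0∞) * volume B := by
    have h1 := hsym (fun ω => ENNReal.ofReal (ρ (ω : EuclideanSpace ℝ (Fin N)) ^ N)) hXm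
    calc ∫⁻ ω : sphere (0 : EuclideanSpace ℝ (Fin N)) 1,
        ENNReal.ofReal (ρ (-(ω : EuclideanSpace ℝ (Fin N))) ^ N) ∂σ
        = ∫⁻ ω : sphere (0 : EuclideanSpace ℝ (Fin N)) 1,
            ENNReal.ofReal (ρ (((-ω : sphere (0 : EuclideanSpace ℝ (Fin N)) 1) :
              EuclideanSpace ℝ (Fin N))) ^ N) ∂σ := by
          simp only [coe_neg_sphere]
      _ = (N : ℝ≥0∞) * volume B := h1.trans hXint
  -- the two test functions
  set Gf : sphere (0 : EuclideanSpace ℝ (Fin N)) 1 → ℝ≥0∞ := fun ω =>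
    (ENNReal.ofReal (ρ (ω : EuclideanSpace ℝ (Fin N)) ^ (N-1)) +
      ENNReal.ofReal (ρ (-(ω : EuclideanSpace ℝ (Fin N))) ^ (N-1))) *
    (C * (Mh (ω : EuclideanSpace ℝ (Fin N)) + Mh (-(ω : EuclideanSpace ℝ (Fin N))))) with hGdef
  set Ff : sphere (0 : EuclideanSpace ℝ (Fin N)) 1 → ℝ≥0∞ := fun ω =>
    (ENNReal.ofReal (ρ (ω : EuclideanSpace ℝ (Fin N)) ^ (N-1)) +
      ENNReal.ofReal (ρ (-(ω : EuclideanSpace ℝ (Fin N))) ^ (N-1))) *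
    (volume K * (ENNReal.ofReal (ρ (ω : EuclideanSpace ℝ (Fin N))) +
      ENNReal.ofReal (ρ (-(ω : EuclideanSpace ℝ (Fin N)))))) with hFdef
  have hGF : ∀ ω, Gf ω ≤ Ff ω := fun ω => mul_le_mul_right (key ω).1 _
  have hFm : Measurable Ff := by
    rw [hFdef]
    exact (hQm.add hQnm).mul (measurable_const.mul (hPm.add hPnm))
  -- lower bound for ∫ Gf
  have hG_lower : C * (volume K + volume K) ≤ ∫⁻ ω, Gf ω ∂σ := by
    have hpoint : ∀ ω : sphere (0 : EuclideanSpace ℝ (Fin N)) 1,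
        C * (Wh (ω : EuclideanSpace ℝ (Fin N)) +
        Wh (-(ω : EuclideanSpace ℝ (Fin N)))) ≤ Gf ω := by
      intro ω
      have e1 := hWQ ω
      have e2 : Wh (-(ω : EuclideanSpace ℝ (Fin N))) ≤
          ENNReal.ofReal (ρ (-(ω : EuclideanSpace ℝ (Fin N))) ^ (N-1)) *
            Mh (-(ω : EuclideanSpace ℝ (Fin N))) := by
        have := hWQ (-ω)
        simpa [coe_neg_sphere] using this
      have e3 : ENNReal.ofReal (ρ (ω : EuclideanSpace ℝ (Fin N)) ^ (N-1)) *
            Mh (ω : EuclideanSpace ℝ (Fin N)) +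
          ENNReal.ofReal (ρ (-(ω : EuclideanSpace ℝ (Fin N))) ^ (N-1)) *
            Mh (-(ω : EuclideanSpace ℝ (Fin N))) ≤
          (ENNReal.ofReal (ρ (ω : EuclideanSpace ℝ (Fin N)) ^ (N-1)) +
            ENNReal.ofReal (ρ (-(ω : EuclideanSpace ℝ (Fin N))) ^ (N-1))) *
          (Mh (ω : EuclideanSpace ℝ (Fin N)) + Mh (-(ω : EuclideanSpace ℝ (Fin N)))) := by
        rw [add_mul, mul_add, mul_add]
        exact add_le_add (le_add_right le_rfl) (le_add_left le_rfl)
      calc C * (Wh (ω : EuclideanSpace ℝ (Fin N)) + Wh (-(ω : EuclideanSpace ℝ (Fin N))))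
          ≤ C * (ENNReal.ofReal (ρ (ω : EuclideanSpace ℝ (Fin N)) ^ (N-1)) *
              Mh (ω : EuclideanSpace ℝ (Fin N)) +
            ENNReal.ofReal (ρ (-(ω : EuclideanSpace ℝ (Fin N))) ^ (N-1)) *
              Mh (-(ω : EuclideanSpace ℝ (Fin N)))) := mul_le_mul_right (add_le_add e1 e2) C
        _ ≤ C * ((ENNReal.ofReal (ρ (ω : EuclideanSpace ℝ (Fin N)) ^ (N-1)) +
            ENNReal.ofReal (ρ (-(ω : EuclideanSpace ℝ (Fin N))) ^ (N-1))) *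
            (Mh (ω : EuclideanSpace ℝ (Fin N)) + Mh (-(ω : EuclideanSpace ℝ (Fin N))))) :=
          mul_le_mul_right e3 C
        _ = Gf ω := by rw [hGdef]; ring
    calc C * (volume K + volume K)
        = ∫⁻ ω, C * (Wh (ω : EuclideanSpace ℝ (Fin N)) +
            Wh (-(ω : EuclideanSpace ℝ (Fin N)))) ∂σ := by
          rw [lintegral_const_mul _ (hWh.fun_add hWhn), lintegral_add_left hWh, hWint, hWint']
      _ ≤ ∫⁻ ω, Gf ω ∂σ := lintegral_mono hpoint
  -- upper bound for ∫ Ff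
  have hF_upper : ∫⁻ ω, Ff ω ∂σ ≤ C * (volume K + volume K) := by
    have hpoint : ∀ ω : sphere (0 : EuclideanSpace ℝ (Fin N)) 1, Ff ω ≤ volume K *
        (2 * (ENNReal.ofReal (ρ (ω : EuclideanSpace ℝ (Fin N)) ^ N) +
          ENNReal.ofReal (ρ (-(ω : EuclideanSpace ℝ (Fin N))) ^ N))) := by
      intro ω
      have hρ1 : 0 ≤ ρ (ω : EuclideanSpace ℝ (Fin N)) := slR_nonneg hc _
      have hρ2 : 0 ≤ ρ (-(ω : EuclideanSpace ℝ (Fin N))) := slR_nonneg hc _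
      have hcross := cross_ineq hN hρ1 hρ2
      have hinner : (ENNReal.ofReal (ρ (ω : EuclideanSpace ℝ (Fin N)) ^ (N-1)) +
            ENNReal.ofReal (ρ (-(ω : EuclideanSpace ℝ (Fin N))) ^ (N-1))) *
          (ENNReal.ofReal (ρ (ω : EuclideanSpace ℝ (Fin N))) +
            ENNReal.ofReal (ρ (-(ω : EuclideanSpace ℝ (Fin N))))) ≤
          2 * (ENNReal.ofReal (ρ (ω : EuclideanSpace ℝ (Fin N)) ^ N) +
            ENNReal.ofReal (ρ (-(ω : EuclideanSpace ℝ (Fin N))) ^ N)) := by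
        calc (ENNReal.ofReal (ρ (ω : EuclideanSpace ℝ (Fin N)) ^ (N-1)) +
              ENNReal.ofReal (ρ (-(ω : EuclideanSpace ℝ (Fin N))) ^ (N-1))) *
            (ENNReal.ofReal (ρ (ω : EuclideanSpace ℝ (Fin N))) +
              ENNReal.ofReal (ρ (-(ω : EuclideanSpace ℝ (Fin N)))))
            = ENNReal.ofReal ((ρ (ω : EuclideanSpace ℝ (Fin N)) ^ (N-1) +
                ρ (-(ω : EuclideanSpace ℝ (Fin N))) ^ (N-1)) *
              (ρ (ω : EuclideanSpace ℝ (Fin N)) + ρ (-(ω : EuclideanSpace ℝ (Fin N))))) := by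
              rw [ENNReal.ofReal_mul (add_nonneg (pow_nonneg hρ1 _) (pow_nonneg hρ2 _)),
                ENNReal.ofReal_add (pow_nonneg hρ1 _) (pow_nonneg hρ2 _),
                ENNReal.ofReal_add hρ1 hρ2]
          _ ≤ ENNReal.ofReal (2 * (ρ (ω : EuclideanSpace ℝ (Fin N)) ^ N +
              ρ (-(ω : EuclideanSpace ℝ (Fin N))) ^ N)) := ENNReal.ofReal_le_ofReal hcross
          _ = 2 * (ENNReal.ofReal (ρ (ω : EuclideanSpace ℝ (Fin N)) ^ N) +
              ENNReal.ofReal (ρ (-(ω : EuclideanSpace ℝ (Fin N))) ^ N)) := by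
              rw [ENNReal.ofReal_mul (by norm_num : (0:ℝ) ≤ 2),
                ENNReal.ofReal_add (pow_nonneg hρ1 _) (pow_nonneg hρ2 _),
                ENNReal.ofReal_ofNat]
      calc Ff ω = volume K *
          ((ENNReal.ofReal (ρ (ω : EuclideanSpace ℝ (Fin N)) ^ (N-1)) +
            ENNReal.ofReal (ρ (-(ω : EuclideanSpace ℝ (Fin N))) ^ (N-1))) *
          (ENNReal.ofReal (ρ (ω : EuclideanSpace ℝ (Fin N))) +
            ENNReal.ofReal (ρ (-(ω : EuclideanSpace ℝ (Fin N)))))) := by rw [hFdef]; ring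
        _ ≤ _ := mul_le_mul_right hinner _
    calc ∫⁻ ω, Ff ω ∂σ
        ≤ ∫⁻ ω, volume K * (2 * (ENNReal.ofReal (ρ (ω : EuclideanSpace ℝ (Fin N)) ^ N) +
            ENNReal.ofReal (ρ (-(ω : EuclideanSpace ℝ (Fin N))) ^ N))) ∂σ :=
          lintegral_mono hpoint
      _ = volume K * (2 * ((N : ℝ≥0∞) * volume B + (N : ℝ≥0∞) * volume B)) := by
          rw [lintegral_const_mul _ (measurable_const.fun_mul (hXm.fun_add hXnm)),
            lintegral_const_mul _ (hXm.fun_add hXnm), lintegral_add_left hXm, hXint, hXint']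
      _ = C * (volume K + volume K) := by rw [hCdef]; ring
  -- finiteness
  have hCfin : C * (volume K + volume K) ≠ ⊤ := by
    rw [hCdef]
    exact ENNReal.mul_ne_top (ENNReal.mul_ne_top (by finiteness) hμBfin)
      (ENNReal.add_ne_top.mpr ⟨hμKfin, hμKfin⟩)
  have hFfin : ∫⁻ ω, Ff ω ∂σ ≠ ⊤ := ne_top_of_le_ne_top hCfin hF_upper
  have hGfin : ∫⁻ ω, Gf ω ∂σ ≠ ⊤ := ne_top_of_le_ne_top hFfin (lintegral_mono hGF)
  -- the positive-measure set where strict inequality holds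
  set sPos : Set (sphere (0 : EuclideanSpace ℝ (Fin N)) 1) :=
    {ω | 0 < ρ (ω : EuclideanSpace ℝ (Fin N)) + ρ (-(ω : EuclideanSpace ℝ (Fin N)))} with hsPosdef
  have hs0 : σ sPos ≠ 0 := by
    intro h0
    have hae : ∀ᵐ ω ∂σ, ω ∉ sPos := measure_eq_zero_iff_ae_notMem.mp h0
    have h1 : ∫⁻ ω : sphere (0 : EuclideanSpace ℝ (Fin N)) 1,
        ENNReal.ofReal (ρ (ω : EuclideanSpace ℝ (Fin N)) ^ N / N) ∂σ = 0 := by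
      rw [lintegral_eq_zero_iff hXdivm]
      filter_upwards [hae] with ω hω
      have h2 : ρ (ω : EuclideanSpace ℝ (Fin N)) + ρ (-(ω : EuclideanSpace ℝ (Fin N))) ≤ 0 :=
        not_lt.mp fun hlt => hω hlt
      have h3 : ρ (ω : EuclideanSpace ℝ (Fin N)) = 0 :=
        le_antisymm (by linarith [slR_nonneg hc (-(ω : EuclideanSpace ℝ (Fin N)))])
          (slR_nonneg hc _)
      simp [h3, zero_pow (show N ≠ 0 by omega)]
    exact hμBpos.ne' (hμB.trans h1)
  have hstrict : ∀ ω ∈ sPos, Gf ω < Ff ω := by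
    intro ω hω
    have hωpos : 0 < ρ (ω : EuclideanSpace ℝ (Fin N)) + ρ (-(ω : EuclideanSpace ℝ (Fin N))) := hω
    have hor : 0 < ρ (ω : EuclideanSpace ℝ (Fin N)) ∨
        0 < ρ (-(ω : EuclideanSpace ℝ (Fin N))) := by
      by_contra hcon2
      push_neg at hcon2
      have h1 := slR_nonneg hc (ω : EuclideanSpace ℝ (Fin N))
      have h2 := slR_nonneg hc (-(ω : EuclideanSpace ℝ (Fin N)))
      rw [hρdef] at hωpos
      linarith [hcon2.1, hcon2.2]
    have hq : (ENNReal.ofReal (ρ (ω : EuclideanSpace ℝ (Fin N)) ^ (N-1)) +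
        ENNReal.ofReal (ρ (-(ω : EuclideanSpace ℝ (Fin N))) ^ (N-1))) ≠ 0 := by
      rcases hor with h | h
      · have : 0 < ENNReal.ofReal (ρ (ω : EuclideanSpace ℝ (Fin N)) ^ (N-1)) :=
          ENNReal.ofReal_pos.mpr (pow_pos h _)
        exact (this.trans_le le_self_add).ne'
      · have : 0 < ENNReal.ofReal (ρ (-(ω : EuclideanSpace ℝ (Fin N))) ^ (N-1)) :=
          ENNReal.ofReal_pos.mpr (pow_pos h _)
        exact (this.trans_le le_add_self).ne'
    have hqfin : (ENNReal.ofReal (ρ (ω : EuclideanSpace ℝ (Fin N)) ^ (N-1)) +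
        ENNReal.ofReal (ρ (-(ω : EuclideanSpace ℝ (Fin N))) ^ (N-1))) ≠ ⊤ :=
      ENNReal.add_ne_top.mpr ⟨ENNReal.ofReal_ne_top, ENNReal.ofReal_ne_top⟩
    rw [hGdef, hFdef]
    exact ENNReal.mul_lt_mul_right hq hqfin ((key ω).2 hωpos)
  have hchain : ∫⁻ ω, Gf ω ∂σ < ∫⁻ ω, Ff ω ∂σ :=
    lintegral_strict_mono_of_ae_le_of_ae_lt_on hFm.aemeasurable hGfin
      (ae_of_all _ hGF) hs0 (ae_of_all _ hstrict)
  exact absurd hchain (not_lt.mpr (hF_upper.trans hG_lower))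
end

section
/- Let B be a measurable set of finite positive measure with measure λ, u : B → ℝ integrable, M ∈ ℝ with u ≤ M on B and u_B := (1/λ(B))∫_B u dλ. Suppose λ({x ∈ B : u(x) ≤ M − s})/λ(B) ≤ C·e^(−δs) for all s > 0, with C ≥ 1, δ > 0. Then M − u_B ≤ (1 + log C)/δ. -/
open MeasureTheory Set Real

/-- bound on the gap between the maximum and the mean. If `u ≤ M` on `B` and
`λ({x ∈ B : u(x) ≤ M − s})/λ(B) ≤ C e^{−δs}` for all `s > 0` (with `C ≥ 1`, `δ > 0`),
then `M − u_B ≤ (1 + log C)/δ`. -/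
theorem stmt_12 {X : Type*} [MeasurableSpace X] (lam : Measure X)
    (B : Set X) (hB : MeasurableSet B) (hpos : 0 < lam B) (hfin : lam B < ⊤)
    (u : X → ℝ) (hu : IntegrableOn u B lam)
    (M : ℝ) (hM : ∀ x ∈ B, u x ≤ M)
    (C δ : ℝ) (hC : 1 ≤ C) (hδ : 0 < δ)
    (hdecay : ∀ s : ℝ, 0 < s →
      (lam (B ∩ {x | u x ≤ M - s})).toReal / (lam B).toReal ≤ C * Real.exp (-δ * s)) :
    M - (1 / (lam B).toReal) * ∫ x in B, u x ∂lam ≤ (1 + Real.log C) / δ := by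
  set μ := lam.restrict B with hμ
  haveI : IsFiniteMeasure μ := ⟨by rwa [hμ, Measure.restrict_apply_univ]⟩
  set A := (lam B).toReal with hA
  have hA0 : 0 < A := ENNReal.toReal_pos hpos.ne' hfin.ne
  set f : X → ℝ := fun x => M - u x with hf
  have hf_nn : 0 ≤ᵐ[μ] f := by
    rw [hμ]
    filter_upwards [ae_restrict_mem hB] with x hx
    exact sub_nonneg.2 (hM x hx)
  have hf_int : Integrable f μ := (integrable_const M).sub hu
  have key := hf_int.integral_eq_integral_meas_lt hf_nn
  set g : ℝ → ℝ := fun t => (μ {a | t < f a}).toReal with hg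
  -- g is antitone hence measurable
  have hg_anti : Antitone g := fun s t hst =>
    ENNReal.toReal_mono (measure_ne_top μ _)
      (measure_mono fun a ha => lt_of_le_of_lt hst ha)
  have hg_nn : ∀ t, 0 ≤ g t := fun t => ENNReal.toReal_nonneg
  set t₀ := Real.log C / δ with ht₀
  have hlogC : 0 ≤ Real.log C := Real.log_nonneg hC
  have ht₀0 : 0 ≤ t₀ := div_nonneg hlogC hδ.le
  -- pointwise bounds on g
  have hgA : ∀ t, g t ≤ A := by
    intro t
    refine ENNReal.toReal_mono hfin.ne ?_
    rw [hμ, Measure.restrict_apply' hB]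
    exact measure_mono (inter_subset_right)
  have hgdecay : ∀ t, 0 < t → g t ≤ A * (C * Real.exp (-δ * t)) := by
    intro t ht
    have h1 : g t ≤ (lam (B ∩ {x | u x ≤ M - t})).toReal := by
      refine ENNReal.toReal_mono (by
        refine (lt_of_le_of_lt (measure_mono inter_subset_left) hfin).ne) ?_
      rw [hμ, Measure.restrict_apply' hB]
      refine measure_mono ?_
      rintro a ⟨ha, haB⟩
      have ha' : t < M - u a := ha
      exact ⟨haB, show u a ≤ M - t by linarith⟩
    calc g t ≤ (lam (B ∩ {x | u x ≤ M - t})).toReal := h1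
      _ ≤ A * (C * Real.exp (-δ * t)) := by
          have := hdecay t ht
          rw [div_le_iff₀ hA0] at this
          linarith [this]
  -- dominating function
  set h : ℝ → ℝ := fun t => if t ≤ t₀ then A else A * (C * Real.exp (-δ * t)) with hh
  have hgh : ∀ t ∈ Ioi (0:ℝ), g t ≤ h t := by
    intro t ht
    by_cases hc : t ≤ t₀
    · simp only [hh, if_pos hc]; exact hgA t
    · simp only [hh, if_neg hc]; exact hgdecay t ht
  -- integrability of h on pieces
  have hsplit : Ioi (0:ℝ) = Ioc 0 t₀ ∪ Ioi t₀ := (Ioc_union_Ioi_eq_Ioi ht₀0).symm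
  have hexp_int : IntegrableOn (fun t => A * (C * Real.exp (-δ * t))) (Ioi t₀) := by
    exact ((exp_neg_integrableOn_Ioi t₀ hδ).const_mul C).const_mul A
  have h_int1 : IntegrableOn h (Ioc 0 t₀) := by
    refine ((integrableOn_const (C := A) measure_Ioc_lt_top.ne)).congr_fun ?_ measurableSet_Ioc
    intro t ht; simp [hh, ht.2]
  have h_int2 : IntegrableOn h (Ioi t₀) := by
    refine hexp_int.congr_fun ?_ measurableSet_Ioi
    intro t ht; simp [hh, not_le.2 (mem_Ioi.1 ht)]
  have h_int : IntegrableOn h (Ioi 0) := by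
    rw [hsplit]; exact h_int1.union h_int2
  -- integrability of g
  have g_int : IntegrableOn g (Ioi 0) := by
    refine Integrable.mono' h_int (hg_anti.measurable.aestronglyMeasurable.restrict) ?_
    rw [ae_restrict_iff' measurableSet_Ioi]
    exact Filter.Eventually.of_forall fun t ht => by
      rw [Real.norm_eq_abs, abs_of_nonneg (hg_nn t)]; exact hgh t ht
  -- compare integrals
  have hmono : ∫ t in Ioi (0:ℝ), g t ≤ ∫ t in Ioi (0:ℝ), h t :=
    setIntegral_mono_on g_int h_int measurableSet_Ioi hgh
  -- compute ∫ h
  have hexp_val : ∫ t in Ioi t₀, Real.exp (-δ * t) = δ⁻¹ * Real.exp (-δ * t₀) := by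
    have := integral_comp_mul_left_Ioi (fun y => Real.exp (-y)) t₀ hδ
    simp only [smul_eq_mul, neg_mul] at this ⊢
    rw [this, integral_exp_neg_Ioi]
  have hexpt₀ : Real.exp (-δ * t₀) = 1 / C := by
    rw [ht₀]
    have hCpos : (0:ℝ) < C := lt_of_lt_of_le one_pos hC
    rw [show -δ * (Real.log C / δ) = -Real.log C by field_simp]
    rw [Real.exp_neg, Real.exp_log hCpos, one_div]
  have hval : ∫ t in Ioi (0:ℝ), h t = A * ((1 + Real.log C) / δ) := by
    rw [hsplit, setIntegral_union (Ioc_disjoint_Ioi le_rfl) measurableSet_Ioi h_int1 h_int2]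
    have e1 : ∫ t in Ioc (0:ℝ) t₀, h t = A * t₀ := by
      rw [setIntegral_congr_fun measurableSet_Ioc (fun t ht => by simp [hh, ht.2] : EqOn h (fun _ => A) (Ioc 0 t₀))]
      simp [Real.volume_Ioc, ENNReal.toReal_ofReal ht₀0, mul_comm]
      exact Or.inl ht₀0
    have e2 : ∫ t in Ioi t₀, h t = A * (1 / δ) := by
      rw [setIntegral_congr_fun measurableSet_Ioi (fun t ht => by simp [hh, not_le.2 (mem_Ioi.1 ht)] : EqOn h (fun t => A * (C * Real.exp (-δ * t))) (Ioi t₀))]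
      rw [integral_const_mul, integral_const_mul, hexp_val, hexpt₀]
      have hCpos : (0:ℝ) < C := lt_of_lt_of_le one_pos hC
      field_simp
    rw [e1, e2, ht₀]
    field_simp
    ring
  -- put it together
  have hint_f : ∫ x, f x ∂μ = M * A - ∫ x in B, u x ∂lam := by
    rw [hμ, hf]
    rw [integral_sub (integrable_const M) hu]
    simp [hA, Measure.restrict_apply_univ]
    ring_nf
    rw [measureReal_def]; ring
  have final : M * A - ∫ x in B, u x ∂lam ≤ A * ((1 + Real.log C) / δ) := by
    rw [← hint_f, key, ← hval]; exact hmono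
  set I := ∫ x in B, u x ∂lam with hI
  rw [← mul_le_mul_iff_of_pos_right hA0]
  have expand : (M - 1 / A * I) * A = M * A - I := by field_simp
  linarith [expand, final]
end
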